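/- Let S be a commutative ring, σ ∈ Aut(S) of finite order n, τ ∈ Aut(S), k ∈ ℕ, and α ∈ S not a zero divisor. The map G determined by G(c) = τ(c) for c ∈ S and G(t) = α t^k defines a ring homomorphism from S[t;σ] to itself if and only if τστ^{-1} = σ^k. In particular, if τ and σ commute, this holds if and only if k ≡ 1 (mod n). -/

import Mathlib

open Finset

noncomputable section

namespace PetitFormal

variable {S : Type*}

/-- Partial norm `N_i^τ(β) = ∏_{j=0}^{i-1} τ^j(β)`. -/
def pnorm [CommRing S] (τ : RingAut S) (i : ℕ) (β : S) : S :=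
  ∏ j ∈ Finset.range i, (τ ^ j) β

/-- Multiplication in the skew polynomial ring `S[t;σ]`, with `t·a = σ(a)·t`,
modelled on finitely supported functions `ℕ →₀ S`. -/
def skewMul [CommRing S] (σ : RingAut S) (x y : ℕ →₀ S) : ℕ →₀ S :=
  x.sum fun i c => y.sum fun j d => Finsupp.single (i + j) (c * (σ ^ i) d)

/-- Embedding of degree `< m` polynomials into `ℕ →₀ S`. -/
def toPoly [CommRing S] {m : ℕ} (x : Fin m → S) : ℕ →₀ S :=
  ∑ i : Fin m, Finsupp.single (i : ℕ) (x i)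

/-- One pass of right division by the monic polynomial `f = t^m - f0(t)`:
`reduceAux σ m f0 K` reduces a skew polynomial supported in `[0, m+K)`
to one supported in `[0, m)`, using `t^{m+j} ≡ ∑_i σ^j(f0 i) t^{j+i}` (mod_r f). -/
def reduceAux [CommRing S] (σ : RingAut S) (m : ℕ) (f0 : Fin m → S) :
    ℕ → (ℕ →₀ S) → (ℕ →₀ S)
  | 0, x => x
  | K + 1, x =>
      reduceAux σ m f0 K
        (x - Finsupp.single (m + K) (x (m + K))
          + ∑ j : Fin m, Finsupp.single (K + (j : ℕ)) (x (m + K) * (σ ^ K) (f0 j)))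

/-- Multiplication in the (generally nonassociative) Petit algebra
`S_f = S[t;σ]/S[t;σ](t^m - f0(t))`: multiply in `S[t;σ]` and reduce by right
division by `f = t^m - f0(t)`. -/
def petitMul [CommRing S] (σ : RingAut S) (m : ℕ) (f0 : Fin m → S)
    (x y : Fin m → S) : Fin m → S :=
  fun d => (reduceAux σ m f0 m (skewMul σ (toPoly x) (toPoly y))) (d : ℕ)

/-- The coefficient vector of the constant `a`, so that `t^m - f0 = t^m - a`. -/
def constF [CommRing S] (m : ℕ) (a : S) : Fin m → S :=
  fun i => if (i : ℕ) = 0 then a else 0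

/-- Multiplication in the Petit algebra `S_a = S[t;σ]/S[t;σ](t^m - a)`. -/
def petitMulC [CommRing S] (σ : RingAut S) (m : ℕ) (a : S) :
    (Fin m → S) → (Fin m → S) → (Fin m → S) :=
  petitMul σ m (constF m a)

/-- The monomial `c t^k` as an element of the Petit algebra (zero if `k ≥ m`). -/
def mono [CommRing S] (m : ℕ) (c : S) (k : ℕ) : Fin m → S :=
  fun i => if (i : ℕ) = k then c else 0

/-- The identity `1 = 1·t^0` of the Petit algebra. -/
def pone [CommRing S] (m : ℕ) : Fin m → S := mono m 1 0

/-- Left-nested power `L(z,s) = z(z(⋯(z)))` (`s` factors) in the Petit algebra. -/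
def lpow [CommRing S] (σ : RingAut S) (m : ℕ) (f0 : Fin m → S) (z : Fin m → S) :
    ℕ → Fin m → S
  | 0 => pone m
  | s + 1 => petitMul σ m f0 z (lpow σ m f0 z s)

/-- `G` is a (unital) ring homomorphism from the Petit algebra `S_f` to `S_g`. -/
def IsPetitHom [CommRing S] (σ : RingAut S) (m : ℕ) (f0 g0 : Fin m → S)
    (G : (Fin m → S) → (Fin m → S)) : Prop :=
  (∀ x y, G (x + y) = G x + G y) ∧
  (∀ x y, G (petitMul σ m f0 x y) = petitMul σ m g0 (G x) (G y)) ∧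
  G (pone m) = pone m

/-- `G` is a (unital) ring endomorphism of the skew polynomial ring `S[t;σ]`. -/
def IsSkewHom [CommRing S] (σ : RingAut S) (G : (ℕ →₀ S) → (ℕ →₀ S)) : Prop :=
  (∀ x y, G (x + y) = G x + G y) ∧
  (∀ x y, G (skewMul σ x y) = skewMul σ (G x) (G y)) ∧
  G (Finsupp.single 0 1) = Finsupp.single 0 1

/-- `G` is a (unital) ring homomorphism from `S[t;σ]` to the Petit algebra `S_g`. -/
def IsSkewToPetitHom [CommRing S] (σ : RingAut S) (m : ℕ) (g0 : Fin m → S)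
    (G : (ℕ →₀ S) → (Fin m → S)) : Prop :=
  (∀ x y, G (x + y) = G x + G y) ∧
  (∀ x y, G (skewMul σ x y) = petitMul σ m g0 (G x) (G y)) ∧
  G (Finsupp.single 0 1) = pone m

/-- The monomial map `G_{τ,α,k}` on `S[t;σ]`:
`∑ a_i t^i ↦ ∑ τ(a_i) (α t^k)^i = ∑ τ(a_i) N_i^{σ^k}(α) t^{ik}`. -/
def skewMonomialMap [CommRing S] (σ τ : RingAut S) (α : S) (k : ℕ)
    (x : ℕ →₀ S) : ℕ →₀ S :=
  x.sum fun i c => Finsupp.single (i * k) (τ c * pnorm (σ ^ k) i α)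

/-- The monomial map `G_{τ,α,k}` from `S[t;σ]` into the Petit algebra `S_g`:
`∑ a_i t^i ↦ ∑ τ(a_i) (α t^k)^i`, powers computed by left nesting. -/
def skewToPetitMonomialMap [CommRing S] (σ τ : RingAut S) (m : ℕ)
    (g0 : Fin m → S) (α : S) (k : ℕ) (x : ℕ →₀ S) : Fin m → S :=
  x.sum fun i c => τ c • lpow σ m g0 (mono m α k) i

/-- The monomial map `G_{τ,α,k}` between Petit algebras of degree `m`:
`∑_{i<m} a_i t^i ↦ ∑_{i<m} τ(a_i) (α t^k)^i`, powers computed by left nesting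
in the codomain `S_g`. -/
def petitMonomialMap [CommRing S] (σ τ : RingAut S) (m : ℕ)
    (g0 : Fin m → S) (α : S) (k : ℕ) (x : Fin m → S) : Fin m → S :=
  ∑ i : Fin m, τ (x i) • lpow σ m g0 (mono m α k) (i : ℕ)

/-- The Hamming weight: the number of nonzero coefficients. -/
def hwt [CommRing S] {m : ℕ} (x : Fin m → S) : ℕ := by
  classical exact (Finset.univ.filter fun i => x i ≠ 0).card

end PetitFormal

open PetitFormal

namespace PetitFormal
variable {S : Type*} [CommRing S]

lemma skewMul_single (σ : RingAut S) (i j : ℕ) (c d : S) :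
    skewMul σ (Finsupp.single i c) (Finsupp.single j d)
      = Finsupp.single (i + j) (c * (σ ^ i) d) := by
  unfold skewMul
  rw [Finsupp.sum_single_index, Finsupp.sum_single_index] <;> simp

lemma skewMul_zero_left (σ : RingAut S) (y : ℕ →₀ S) : skewMul σ 0 y = 0 := by
  simp [skewMul]

lemma skewMul_zero_right (σ : RingAut S) (x : ℕ →₀ S) : skewMul σ x 0 = 0 := by
  simp [skewMul]

lemma skewMul_add_left (σ : RingAut S) (x y z : ℕ →₀ S) :
    skewMul σ (x + y) z = skewMul σ x z + skewMul σ y z := by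
  unfold skewMul
  rw [Finsupp.sum_add_index'] <;> simp [add_mul, Finsupp.single_add, Finsupp.sum_add]

lemma skewMul_add_right (σ : RingAut S) (x y z : ℕ →₀ S) :
    skewMul σ x (y + z) = skewMul σ x y + skewMul σ x z := by
  unfold skewMul
  rw [← Finsupp.sum_add]
  refine Finsupp.sum_congr fun i _ => ?_
  rw [Finsupp.sum_add_index'] <;> simp [mul_add, Finsupp.single_add]

lemma smm_single (σ τ : RingAut S) (α : S) (k i : ℕ) (c : S) :
    skewMonomialMap σ τ α k (Finsupp.single i c)
      = Finsupp.single (i * k) (τ c * pnorm (σ ^ k) i α) := by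
  unfold skewMonomialMap
  rw [Finsupp.sum_single_index]; simp

lemma smm_zero (σ τ : RingAut S) (α : S) (k : ℕ) :
    skewMonomialMap σ τ α k 0 = 0 := by simp [skewMonomialMap]

lemma smm_add (σ τ : RingAut S) (α : S) (k : ℕ) (x y : ℕ →₀ S) :
    skewMonomialMap σ τ α k (x + y)
      = skewMonomialMap σ τ α k x + skewMonomialMap σ τ α k y := by
  unfold skewMonomialMap
  rw [Finsupp.sum_add_index'] <;> simp [add_mul, Finsupp.single_add]

lemma pnorm_add (τ' : RingAut S) (i j : ℕ) (α : S) :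
    pnorm τ' (i + j) α = pnorm τ' i α * (τ' ^ i) (pnorm τ' j α) := by
  unfold pnorm
  rw [Finset.prod_range_add, map_prod]
  congr 1
  refine Finset.prod_congr rfl fun l _ => ?_
  rw [pow_add]; rfl

end PetitFormal

namespace PetitFormal
variable {S : Type*} [CommRing S]

lemma smm_mul (σ τ : RingAut S) (α : S) (k : ℕ)
    (hc : ∀ x, τ (σ x) = (σ ^ k) (τ x)) (x y : ℕ →₀ S) :
    skewMonomialMap σ τ α k (skewMul σ x y)
      = skewMul σ (skewMonomialMap σ τ α k x) (skewMonomialMap σ τ α k y) := by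
  have hsemi : SemiconjBy τ σ (σ ^ k) := by
    ext a; exact hc a
  have hci : ∀ (i : ℕ) (a : S), τ ((σ ^ i) a) = ((σ ^ k) ^ i) (τ a) := by
    intro i a
    have := (hsemi.pow_right i).eq
    calc τ ((σ ^ i) a) = (τ * σ ^ i) a := rfl
      _ = ((σ ^ k) ^ i * τ) a := by rw [this]
      _ = ((σ ^ k) ^ i) (τ a) := rfl
  induction x using Finsupp.induction_linear with
  | zero => simp [skewMul_zero_left, smm_zero]
  | add f g hf hg =>
      rw [skewMul_add_left, smm_add, hf, hg, smm_add, skewMul_add_left]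
  | single i c =>
      induction y using Finsupp.induction_linear with
      | zero => simp [skewMul_zero_right, smm_zero]
      | add f g hf hg =>
          rw [skewMul_add_right, smm_add, hf, hg, smm_add, skewMul_add_right]
      | single j d =>
          rw [skewMul_single, smm_single, smm_single, smm_single, skewMul_single,
            add_mul, pnorm_add]
          congr 1
          have h1 : (σ ^ (i * k)) = ((σ ^ k) ^ i) := by
            rw [← pow_mul, mul_comm]
          rw [map_mul, hci, map_mul, h1]
          ring

end PetitFormal



/-- Lemma `L:Ktsigmatoitself`: the monomial map `G_{τ,α,k}` is a ring
endomorphism of `S[t;σ]` iff `τστ⁻¹ = σ^k`; if `τ` and `σ` commute, iff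
`k ≡ 1 (mod n)` where `n` is the order of `σ`. -/
theorem stmt4 {S : Type*} [CommRing S] (σ τ : RingAut S) (n : ℕ)
    (hn : orderOf σ = n) (hn0 : 0 < n) (k : ℕ)
    (α : S) (hα : α ∈ nonZeroDivisors S) :
    (IsSkewHom σ (skewMonomialMap σ τ α k) ↔ τ * σ * τ⁻¹ = σ ^ k) ∧
    ((∀ x, τ (σ x) = σ (τ x)) →
      (IsSkewHom σ (skewMonomialMap σ τ α k) ↔ k ≡ 1 [MOD n])) := by
  have main : IsSkewHom σ (skewMonomialMap σ τ α k) ↔ τ * σ * τ⁻¹ = σ ^ k := by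
    constructor
    · intro h
      have ha : ∀ a, τ (σ a) = (σ ^ k) (τ a) := by
        intro a
        have h2 := h.2.1 (Finsupp.single 1 1) (Finsupp.single 0 a)
        rw [skewMul_single, smm_single, smm_single, smm_single, skewMul_single] at h2
        have h3 := DFunLike.congr_fun h2 k
        simp [pnorm, Finsupp.single_apply] at h3
        rw [← RingAut.coe_pow] at h3
        have h4 : τ (σ a) * α = (σ ^ k) (τ a) * α := by
          rw [h3]; ring
        exact (mul_cancel_right_mem_nonZeroDivisors hα).mp h4
      ext x
      show τ (σ (τ⁻¹ x)) = (σ ^ k) x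
      rw [ha]
      congr 1
      exact τ.apply_symm_apply x
    · intro heq
      rw [mul_inv_eq_iff_eq_mul] at heq
      have hc : ∀ x, τ (σ x) = (σ ^ k) (τ x) := by
        intro x
        show (τ * σ) x = _
        rw [heq]; rfl
      refine ⟨smm_add σ τ α k, smm_mul σ τ α k hc, ?_⟩
      rw [smm_single]
      simp [pnorm]
  refine ⟨main, fun hcomm => ?_⟩
  rw [main]
  have hts : τ * σ * τ⁻¹ = σ := by
    rw [mul_inv_eq_iff_eq_mul]
    ext x
    exact hcomm x
  rw [hts]
  have hp : σ ^ 1 = σ ^ k ↔ 1 ≡ k [MOD orderOf σ] := pow_eq_pow_iff_modEq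
  rw [pow_one, hn] at hp
  rw [hp]
  exact ⟨Nat.ModEq.symm, Nat.ModEq.symm⟩
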